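/- For m ≥ 4, the minimum distance of BiD^⊥(m,2,2) is exactly 6: there exist weight-6 codewords (e.g., (X_1+X_1²)(1 + X_2···X_m + X_2²···X_m²)) and no nonzero codewords of weight at most 5. -/

import Mathlib

open Finset

abbrev F4 := GaloisField 2 2

noncomputable def toF4 : ZMod 2 →+* F4 := ZMod.castHom dvd_rfl F4

def dotp {m : ℕ} (i j : Fin m → ZMod 3) : ZMod 3 := ∑ l, i l * j l

noncomputable def dft {m : ℕ} (α : F4) (f : (Fin m → ZMod 3) → ZMod 2)
    (j : Fin m → ZMod 3) : F4 :=
  ∑ i : Fin m → ZMod 3, toF4 (f i) * α ^ (dotp i j).val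

noncomputable def code (m : ℕ) (α : F4) (W : Set ℕ) :
    Set ((Fin m → ZMod 3) → ZMod 2) :=
  {f | ∀ j : Fin m → ZMod 3, hammingNorm j ∉ W → dft α f j = 0}

lemma two_eq_zero : (2 : F4) = 0 := by
  have h := CharP.cast_eq_zero F4 2; exact_mod_cast h

section alpha
variable {α : F4} (hα : α ^ 2 = α + 1)
include hα

lemma alpha_ne_zero : α ≠ 0 := by
  intro h; rw [h] at hα; simp at hα

lemma alpha_ne_one : α ≠ 1 := by
  intro h; rw [h] at hα
  have : (1 : F4) = 0 := by linear_combination -hα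
  simp at this

lemma alpha_cube : α ^ 3 = 1 := by
  linear_combination (α + 1) * hα + α * two_eq_zero

end alpha

/-! ### decomposition in the basis 1, α -/

def A2 : ZMod 3 → ZMod 2 := fun z => if z = 1 then 0 else 1
def B2 : ZMod 3 → ZMod 2 := fun z => if z = 0 then 0 else 1

lemma zmod3_cases : ∀ z : ZMod 3, z = 0 ∨ z = 1 ∨ z = 2 := by decide

lemma zmod2_cases : ∀ z : ZMod 2, z = 0 ∨ z = 1 := by decide

section alpha
variable {α : F4} (hα : α ^ 2 = α + 1)
include hα

lemma decomp (z : ZMod 3) : α ^ z.val = toF4 (A2 z) + toF4 (B2 z) * α := by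
  rcases zmod3_cases z with h | h | h <;> subst h
  · rw [show A2 0 = 1 from by decide, show B2 0 = 0 from by decide,
      show (0 : ZMod 3).val = 0 from rfl]
    simp
  · rw [show A2 1 = 0 from by decide, show B2 1 = 1 from by decide,
      show (1 : ZMod 3).val = 1 from rfl]
    simp
  · rw [show A2 2 = 1 from by decide, show B2 2 = 1 from by decide,
      show (2 : ZMod 3).val = 2 from rfl, hα]
    rw [map_one]; ring

lemma indep (a b : ZMod 2) (h : toF4 a + toF4 b * α = 0) : a = 0 ∧ b = 0 := by
  have hinj : Function.Injective (toF4 : ZMod 2 →+* F4) := RingHom.injective _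
  rcases zmod2_cases b with hb | hb
  · subst hb
    simp at h
    refine ⟨hinj (by simpa using h), rfl⟩
  · exfalso; subst hb
    simp at h
    rcases zmod2_cases a with ha | ha <;> subst ha <;> simp at h
    · exact alpha_ne_zero hα h
    · have : α = 1 := by linear_combination h - two_eq_zero
      exact alpha_ne_one hα this

lemma split_sum {ι : Type*} (s : Finset ι) (z : ι → ZMod 3) :
    ∑ i ∈ s, α ^ (z i).val =
      toF4 (∑ i ∈ s, A2 (z i)) + toF4 (∑ i ∈ s, B2 (z i)) * α := by
  rw [map_sum, map_sum, Finset.sum_mul, ← Finset.sum_add_distrib]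
  exact Finset.sum_congr rfl fun i _ => decomp hα (z i)

end alpha

/-! ### parity predicates and decided combinatorial lemmas -/

def V2p (a b : ZMod 3) : Prop := A2 a + A2 b = 0 ∧ B2 a + B2 b = 0
instance (a b : ZMod 3) : Decidable (V2p a b) := by unfold V2p; infer_instance
def V3p (a b c : ZMod 3) : Prop :=
  A2 a + A2 b + A2 c = 0 ∧ B2 a + B2 b + B2 c = 0
instance (a b c : ZMod 3) : Decidable (V3p a b c) := by unfold V3p; infer_instance
def V4p (a b c d : ZMod 3) : Prop :=
  A2 a + A2 b + A2 c + A2 d = 0 ∧ B2 a + B2 b + B2 c + B2 d = 0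
instance (a b c d : ZMod 3) : Decidable (V4p a b c d) := by unfold V4p; infer_instance
def V5p (a b c d e : ZMod 3) : Prop :=
  A2 a + A2 b + A2 c + A2 d + A2 e = 0 ∧ B2 a + B2 b + B2 c + B2 d + B2 e = 0
instance (a b c d e : ZMod 3) : Decidable (V5p a b c d e) := by unfold V5p; infer_instance

lemma NORM3 : ∀ a b c : ZMod 3, V3p a b c → V3p 0 (b - a) (c - a) := by decide
lemma NORM4 : ∀ a b c d : ZMod 3, V4p a b c d → V4p 0 (b - a) (c - a) (d - a) := by decide
lemma NORM5 : ∀ a b c d e : ZMod 3,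
    V5p a b c d e → V5p 0 (b - a) (c - a) (d - a) (e - a) := by decide

lemma SOLVE2 : ∀ u v : ZMod 3, u + v * 1 = 0 → u + v * 2 = 0 → u = 0 ∧ v = 0 := by decide

lemma E2 : ∀ a b : ZMod 3, V2p a b → b - a = 0 := by decide

lemma L3 : ∀ x1 x2 y1 y2 : ZMod 3,
    V3p 0 (x1 + y1 * 1) (x2 + y2 * 1) → V3p 0 (x1 + y1 * 2) (x2 + y2 * 2) →
    ((x1 = 0 ∧ x2 = 0) ∧ (y1 ≠ 0 ∧ y2 ≠ 0 ∧ y1 ≠ y2)) ∨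
    ((x1 ≠ 0 ∧ x2 ≠ 0 ∧ x1 ≠ x2) ∧ (y1 = 0 ∧ y2 = 0)) := by decide

lemma L4 : ∀ x1 x2 x3 y1 y2 y3 z1 z2 z3 : ZMod 3,
    V4p 0 (x1+y1*1) (x2+y2*1) (x3+y3*1) → V4p 0 (x1+y1*2) (x2+y2*2) (x3+y3*2) →
    V4p 0 (x1+z1*1) (x2+z2*1) (x3+z3*1) → V4p 0 (x1+z1*2) (x2+z2*2) (x3+z3*2) →
    V4p 0 (y1+z1*1) (y2+z2*1) (y3+z3*1) → V4p 0 (y1+z1*2) (y2+z2*2) (y3+z3*2) →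
    ((x1 = 0 ∧ x2 = x3) ∧ (y1 = 0 ∧ y2 = y3) ∧ (z1 = 0 ∧ z2 = z3)) ∨
    ((x2 = 0 ∧ x1 = x3) ∧ (y2 = 0 ∧ y1 = y3) ∧ (z2 = 0 ∧ z1 = z3)) ∨
    ((x3 = 0 ∧ x1 = x2) ∧ (y3 = 0 ∧ y1 = y2) ∧ (z3 = 0 ∧ z1 = z2)) := by decide

def Vcol (x : Fin 5 → ZMod 3) : Prop := V5p (x 0) (x 1) (x 2) (x 3) (x 4)
instance (x : Fin 5 → ZMod 3) : Decidable (Vcol x) := by unfold Vcol; infer_instance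
def isSing (x : Fin 5 → ZMod 3) (s : Fin 5) : Prop := ∀ u, u ≠ s → x u ≠ x s
instance (x : Fin 5 → ZMod 3) (s : Fin 5) : Decidable (isSing x s) := by
  unfold isSing; infer_instance
def Wstr (x : Fin 5 → ZMod 3) : Prop := ∃ s, ∀ t, isSing x t ↔ t = s
instance (x : Fin 5 → ZMod 3) : Decidable (Wstr x) := by unfold Wstr; infer_instance
def pc1 : Fin 5 → Fin 5 := ![1, 0, 0, 0, 0]
def pc2 : Fin 5 → Fin 5 := ![2, 2, 1, 1, 1]
def pc3 : Fin 5 → Fin 5 := ![3, 3, 3, 2, 2]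
def pcode (x : Fin 5 → ZMod 3) (s : Fin 5) : ZMod 3 :=
  if x (pc1 s) = x (pc2 s) then 0 else if x (pc1 s) = x (pc3 s) then 1 else 2
def PairConcl (x y : Fin 5 → ZMod 3) : Prop :=
  (∃ s : Fin 5, (∀ t, isSing x t ↔ t = s) ∧ (∀ t, isSing y t ↔ t = s) ∧
      pcode x s ≠ pcode y s) ∨
  (¬ Wstr x ∧ ¬ Wstr y ∧ (Vcol x ↔ ¬ Vcol y))
instance (x y : Fin 5 → ZMod 3) : Decidable (PairConcl x y) := by
  unfold PairConcl; infer_instance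

lemma L5 : ∀ x1 x2 x3 x4 y1 y2 y3 y4 : ZMod 3,
    V5p 0 (x1+y1*1) (x2+y2*1) (x3+y3*1) (x4+y4*1) →
    V5p 0 (x1+y1*2) (x2+y2*2) (x3+y3*2) (x4+y4*2) →
    PairConcl ![0, x1, x2, x3, x4] ![0, y1, y2, y3, y4] := by decide

lemma PIGEON : ∀ k0 k1 k2 k3 : ZMod 3, k0 = k1 ∨ k0 = k2 ∨ k0 = k3 ∨
    k1 = k2 ∨ k1 = k3 ∨ k2 = k3 := by decide

lemma PIGEON' (k0 k1 k2 k3 : ZMod 3) (h1 : k0 ≠ k1) (h2 : k0 ≠ k2) (h3 : k0 ≠ k3)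
    (h4 : k1 ≠ k2) (h5 : k1 ≠ k3) (h6 : k2 ≠ k3) : False :=
  (PIGEON k0 k1 k2 k3).elim h1 fun h => h.elim h2 fun h => h.elim h3 fun h =>
    h.elim h4 fun h => h.elim h5 h6

lemma EXIST6 : ∀ w S : ZMod 3, (w = 0 ∨ S ≠ 0) →
    (∑ p ∈ (({1, 2} : Finset (ZMod 3)) ×ˢ Finset.univ), A2 (p.1 * w + p.2 * S)) = 0 ∧
    (∑ p ∈ (({1, 2} : Finset (ZMod 3)) ×ˢ Finset.univ), B2 (p.1 * w + p.2 * S)) = 0 := by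
  decide

/-! ### weight-two test vectors -/

def jj {m : ℕ} (l1 l2 : Fin m) (b : ZMod 3) : Fin m → ZMod 3 :=
  fun l => if l = l1 then 1 else if l = l2 then b else 0

lemma hamming_jj {m : ℕ} {l1 l2 : Fin m} (hne : l1 ≠ l2) {b : ZMod 3} (hb : b ≠ 0) :
    hammingNorm (jj l1 l2 b) = 2 := by
  have h : ({l | jj l1 l2 b l ≠ 0} : Finset (Fin m)) = {l1, l2} := by
    ext l
    simp only [mem_filter, mem_univ, true_and, mem_insert, mem_singleton]
    unfold jj
    by_cases h1 : l = l1
    · simp [h1]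
    · by_cases h2 : l = l2 <;> simp [h1, h2, hb, hne.symm]
  show ({l | jj l1 l2 b l ≠ 0} : Finset (Fin m)).card = 2
  rw [h, card_pair hne]

lemma dot_jj {m : ℕ} {l1 l2 : Fin m} (hne : l1 ≠ l2) (b : ZMod 3) (i : Fin m → ZMod 3) :
    dotp i (jj l1 l2 b) = i l1 + i l2 * b := by
  unfold dotp
  rw [← Finset.sum_subset (Finset.subset_univ {l1, l2})]
  · rw [Finset.sum_pair hne]
    unfold jj
    rw [if_pos rfl, if_neg hne.symm, if_pos rfl, mul_one]
  · intro x _ hx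
    simp only [mem_insert, mem_singleton, not_or] at hx
    unfold jj
    rw [if_neg hx.1, if_neg hx.2, mul_zero]

lemma norm_le {m : ℕ} (j : Fin m → ZMod 3) : hammingNorm j ≤ m := by
  calc hammingNorm j ≤ (Finset.univ : Finset (Fin m)).card := Finset.card_filter_le _ _
  _ = m := by simp

lemma norm_two {m : ℕ} {j : Fin m → ZMod 3}
    (hj : hammingNorm j ∉ {n | n ≤ m ∧ n ≠ 2}) : hammingNorm j = 2 := by
  by_contra h
  exact hj ⟨norm_le j, h⟩

/-! ### dft as a sum over the support -/

lemma dft_support {m : ℕ} (α : F4) (f : (Fin m → ZMod 3) → ZMod 2) (j : Fin m → ZMod 3) :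
    dft α f j = ∑ i ∈ ({i | f i ≠ 0} : Finset (Fin m → ZMod 3)), α ^ (dotp i j).val := by
  unfold dft
  rw [← Finset.sum_subset (Finset.subset_univ ({i | f i ≠ 0} : Finset (Fin m → ZMod 3)))]
  · refine Finset.sum_congr rfl fun i hi => ?_
    simp only [mem_filter] at hi
    have h1 : f i = 1 := by
      rcases zmod2_cases (f i) with h | h
      · exact absurd h hi.2
      · exact h
    rw [h1, map_one, one_mul]
  · intro i _ hi
    simp only [mem_filter, mem_univ, true_and, not_not] at hi
    rw [hi, map_zero, zero_mul]

section alpha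
variable {α : F4} (hα : α ^ 2 = α + 1)
include hα

lemma SPLIT3 (a b c : ZMod 3)
    (h : α ^ a.val + α ^ b.val + α ^ c.val = 0) : V3p a b c := by
  refine indep hα _ _ ?_
  rw [map_add, map_add, map_add, map_add, add_mul, add_mul]
  rw [decomp hα a, decomp hα b, decomp hα c] at h
  linear_combination h

lemma SPLIT2 (a b : ZMod 3)
    (h : α ^ a.val + α ^ b.val = 0) : V2p a b := by
  refine indep hα _ _ ?_
  rw [map_add, map_add, add_mul]
  rw [decomp hα a, decomp hα b] at h
  linear_combination h

lemma SPLIT4 (a b c d : ZMod 3)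
    (h : α ^ a.val + α ^ b.val + α ^ c.val + α ^ d.val = 0) : V4p a b c d := by
  refine indep hα _ _ ?_
  rw [map_add, map_add, map_add, map_add, map_add, map_add, add_mul, add_mul, add_mul]
  rw [decomp hα a, decomp hα b, decomp hα c, decomp hα d] at h
  linear_combination h

lemma SPLIT5 (a b c d e : ZMod 3)
    (h : α ^ a.val + α ^ b.val + α ^ c.val + α ^ d.val + α ^ e.val = 0) :
    V5p a b c d e := by
  refine indep hα _ _ ?_
  rw [map_add, map_add, map_add, map_add, map_add, map_add, map_add, map_add,
    add_mul, add_mul, add_mul, add_mul]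
  rw [decomp hα a, decomp hα b, decomp hα c, decomp hα d, decomp hα e] at h
  linear_combination h

end alpha

/-! ### picking coordinates -/

lemma pick_two {m : ℕ} (hm : 4 ≤ m) (l : Fin m) :
    ∃ a b : Fin m, a ≠ b ∧ a ≠ l ∧ b ≠ l := by
  have h0 : (0 : ℕ) < m := by omega
  have h1 : (1 : ℕ) < m := by omega
  have h2 : (2 : ℕ) < m := by omega
  by_cases e0 : l = ⟨0, h0⟩
  · exact ⟨⟨1, h1⟩, ⟨2, h2⟩, by simp [Fin.ext_iff], by simp [e0, Fin.ext_iff],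
      by simp [e0, Fin.ext_iff]⟩
  · by_cases e1 : l = ⟨1, h1⟩
    · exact ⟨⟨0, h0⟩, ⟨2, h2⟩, by simp [Fin.ext_iff], by simp [e1, Fin.ext_iff],
        by simp [e1, Fin.ext_iff]⟩
    · exact ⟨⟨0, h0⟩, ⟨1, h1⟩, by simp [Fin.ext_iff],
        fun h => e0 h.symm, fun h => e1 h.symm⟩

lemma pick_one {m : ℕ} (hm : 4 ≤ m) (l l' : Fin m) :
    ∃ c : Fin m, c ≠ l ∧ c ≠ l' := by
  have h0 : (0 : ℕ) < m := by omega
  have h1 : (1 : ℕ) < m := by omega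
  have h2 : (2 : ℕ) < m := by omega
  have d01 : (⟨0, h0⟩ : Fin m) ≠ ⟨1, h1⟩ := by simp [Fin.ext_iff]
  have d02 : (⟨0, h0⟩ : Fin m) ≠ ⟨2, h2⟩ := by simp [Fin.ext_iff]
  have d12 : (⟨1, h1⟩ : Fin m) ≠ ⟨2, h2⟩ := by simp [Fin.ext_iff]
  by_cases a0 : (⟨0, h0⟩ : Fin m) = l ∨ (⟨0, h0⟩ : Fin m) = l'
  · by_cases a1 : (⟨1, h1⟩ : Fin m) = l ∨ (⟨1, h1⟩ : Fin m) = l'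
    · refine ⟨⟨2, h2⟩, ?_, ?_⟩ <;>
        (intro h; rcases a0 with a | a <;> rcases a1 with b | b <;> simp_all)
    · push_neg at a1
      exact ⟨_, a1.1, a1.2⟩
  · push_neg at a0
    exact ⟨_, a0.1, a0.2⟩

/-! ### existence of a weight-6 codeword -/

lemma existence {m : ℕ} (hm : 4 ≤ m) (α : F4) (hα : α ^ 2 = α + 1) :
    ∃ f ∈ code m α {n | n ≤ m ∧ n ≠ 2}, hammingNorm f = 6 := by
  have h0 : (0 : ℕ) < m := by omega
  have h1 : (1 : ℕ) < m := by omega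
  set c0 : Fin m := ⟨0, h0⟩ with hc0
  set c1 : Fin m := ⟨1, h1⟩ with hc1
  have hc10 : c1 ≠ c0 := by simp [hc0, hc1, Fin.ext_iff]
  set g : ZMod 3 × ZMod 3 → (Fin m → ZMod 3) :=
    fun p l => if l = c0 then p.1 else p.2 with hg
  set S' : Finset (ZMod 3 × ZMod 3) := ({1, 2} : Finset (ZMod 3)) ×ˢ Finset.univ with hS'
  set f : (Fin m → ZMod 3) → ZMod 2 :=
    fun i => if (i c0 ≠ 0 ∧ ∃ c : ZMod 3, ∀ l, l ≠ c0 → i l = c) then 1 else 0 with hf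
  have hginj : ∀ p q : ZMod 3 × ZMod 3, g p = g q → p = q := by
    intro p q h
    have e1 : g p c0 = g q c0 := by rw [h]
    have e2 : g p c1 = g q c1 := by rw [h]
    rw [show g p c0 = p.1 from if_pos rfl, show g q c0 = q.1 from if_pos rfl] at e1
    rw [show g p c1 = p.2 from if_neg hc10, show g q c1 = q.2 from if_neg hc10] at e2
    exact Prod.ext e1 e2
  have hsupp : ({i | f i ≠ 0} : Finset (Fin m → ZMod 3)) = S'.image g := by
    ext i
    simp only [mem_filter, mem_univ, true_and, mem_image]
    constructor
    · intro hi
      have hcond : i c0 ≠ 0 ∧ ∃ c : ZMod 3, ∀ l, l ≠ c0 → i l = c := by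
        by_contra hcon
        rw [hf] at hi
        simp only [if_neg hcon] at hi
        exact hi rfl
      obtain ⟨ha, c, hc⟩ := hcond
      refine ⟨(i c0, c), ?_, ?_⟩
      · rw [hS', Finset.mem_product]
        refine ⟨?_, Finset.mem_univ _⟩
        rcases zmod3_cases (i c0) with h | h | h
        · exact absurd h ha
        · rw [h]; simp
        · rw [h]; simp
      · funext l
        by_cases hl : l = c0
        · simp [hg, hl]
        · rw [hg]; simp only [if_neg hl]
          exact (hc l hl).symm
    · rintro ⟨⟨a, c⟩, hmem, rfl⟩
      rw [hS', Finset.mem_product] at hmem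
      have ha : a ≠ 0 := by
        have := hmem.1
        simp only [Finset.mem_insert, Finset.mem_singleton] at this
        rcases this with h | h <;> rw [h] <;> decide
      have hcond : g (a, c) c0 ≠ 0 ∧ ∃ c' : ZMod 3, ∀ l, l ≠ c0 → g (a, c) l = c' := by
        constructor
        · rw [show g (a, c) c0 = a from if_pos rfl]; exact ha
        · exact ⟨c, fun l hl => if_neg hl⟩
      rw [hf]
      simp only [if_pos hcond]
      exact one_ne_zero
  refine ⟨f, ?_, ?_⟩
  · -- membership in the code
    intro j hj
    have hj2 : hammingNorm j = 2 := norm_two hj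
    rw [dft_support, hsupp, Finset.sum_image (fun p _ q _ h => hginj p q h)]
    set Sj : ZMod 3 := ∑ l ∈ Finset.univ.erase c0, j l with hSj
    have hdot : ∀ p : ZMod 3 × ZMod 3, dotp (g p) j = p.1 * j c0 + p.2 * Sj := by
      intro p
      unfold dotp
      rw [← Finset.add_sum_erase _ _ (Finset.mem_univ c0),
        show g p c0 = p.1 from if_pos rfl, hSj, Finset.mul_sum]
      congr 1
      refine Finset.sum_congr rfl fun l hl => ?_
      rw [show g p l = p.2 from if_neg (Finset.mem_erase.mp hl).1]
    have hwS : j c0 = 0 ∨ Sj ≠ 0 := by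
      by_cases hc : j c0 = 0
      · exact Or.inl hc
      · right
        have hmem : c0 ∈ ({l | j l ≠ 0} : Finset (Fin m)) := by
          simp only [mem_filter, mem_univ, true_and]; exact hc
        have hcard1 : (({l | j l ≠ 0} : Finset (Fin m)).erase c0).card = 1 := by
          rw [Finset.card_erase_of_mem hmem]
          rw [show ({l | j l ≠ 0} : Finset (Fin m)).card = hammingNorm j from rfl, hj2]
        obtain ⟨l', hl'⟩ := Finset.card_eq_one.mp hcard1
        have hSjl : Sj = j l' := by
          rw [hSj]
          rw [show (∑ l ∈ Finset.univ.erase c0, j l)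
              = ∑ l ∈ ({l | j l ≠ 0} : Finset (Fin m)).erase c0, j l from
            (Finset.sum_subset (Finset.erase_subset_erase c0 (Finset.subset_univ _))
              (fun x hx hnx => by
                by_contra hne0
                exact hnx (Finset.mem_erase.mpr ⟨(Finset.mem_erase.mp hx).1,
                  by simp only [mem_filter, mem_univ, true_and]; exact hne0⟩))).symm]
          rw [hl', Finset.sum_singleton]
        have : l' ∈ ({l | j l ≠ 0} : Finset (Fin m)).erase c0 := by rw [hl']; exact Finset.mem_singleton_self l'
        have hne0 : j l' ≠ 0 := by
          have := (Finset.mem_erase.mp this).2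
          simpa only [mem_filter, mem_univ, true_and] using this
        rw [hSjl]; exact hne0
    calc ∑ p ∈ S', α ^ (dotp (g p) j).val
        = ∑ p ∈ S', α ^ ((p.1 * j c0 + p.2 * Sj : ZMod 3)).val := by
          exact Finset.sum_congr rfl fun p _ => by rw [hdot p]
      _ = toF4 (∑ p ∈ S', A2 (p.1 * j c0 + p.2 * Sj))
            + toF4 (∑ p ∈ S', B2 (p.1 * j c0 + p.2 * Sj)) * α := split_sum hα _ _
      _ = 0 := by
          rw [(EXIST6 (j c0) Sj hwS).1, (EXIST6 (j c0) Sj hwS).2, map_zero,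
            zero_mul, add_zero]
  · -- Hamming norm is 6
    show ({i | f i ≠ 0} : Finset (Fin m → ZMod 3)).card = 6
    rw [hsupp, Finset.card_image_of_injective _ (fun p q => hginj p q)]
    decide

/-! ### the lower bound -/

lemma hconv : ∀ u v u0 v0 cb : ZMod 3,
    (u + v * cb) - (u0 + v0 * cb) = (u - u0) + (v - v0) * cb := by intros; ring

lemma iff_contra {P Q R : Prop} (h1 : P ↔ ¬Q) (h2 : P ↔ ¬R) (h3 : Q ↔ ¬R) : False := by
  tauto

lemma pairing_full {γ : Type*} {u0 u1 u2 u3 : γ}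
    (h : ((u1 = u0 ∧ u2 = u3) ∧ (u2 = u0 ∧ u1 = u3)) ∨
         ((u1 = u0 ∧ u2 = u3) ∧ (u3 = u0 ∧ u1 = u2)) ∨
         ((u2 = u0 ∧ u1 = u3) ∧ (u3 = u0 ∧ u1 = u2))) :
    (u1 = u0 ∧ u2 = u3) ∧ (u2 = u0 ∧ u1 = u3) ∧ (u3 = u0 ∧ u1 = u2) := by
  rcases h with ⟨⟨a1, a2⟩, b1, b2⟩ | ⟨⟨a1, a2⟩, b1, b2⟩ | ⟨⟨a1, a2⟩, b1, b2⟩ <;>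
    exact ⟨⟨by grind, by grind⟩, ⟨by grind, by grind⟩, ⟨by grind, by grind⟩⟩

set_option maxHeartbeats 1000000 in
lemma lower_bound {m : ℕ} (hm : 4 ≤ m) (α : F4) (hα : α ^ 2 = α + 1) :
    ∀ f ∈ code m α {n | n ≤ m ∧ n ≠ 2}, f ≠ 0 → 6 ≤ hammingNorm f := by
  intro f hf hne0
  by_contra hlt
  push_neg at hlt
  set s := ({i | f i ≠ 0} : Finset (Fin m → ZMod 3)) with hs
  have h0 : (0 : ℕ) < m := by omega
  have h1 : (1 : ℕ) < m := by omega
  have h2 : (2 : ℕ) < m := by omega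
  have h3 : (3 : ℕ) < m := by omega
  set i0 : Fin m := ⟨0, h0⟩ with hi0
  set i1 : Fin m := ⟨1, h1⟩ with hi1
  set i2 : Fin m := ⟨2, h2⟩ with hi2
  set i3 : Fin m := ⟨3, h3⟩ with hi3
  have d01 : i0 ≠ i1 := by simp [hi0, hi1, Fin.ext_iff]
  have d02 : i0 ≠ i2 := by simp [hi0, hi2, Fin.ext_iff]
  have d03 : i0 ≠ i3 := by simp [hi0, hi3, Fin.ext_iff]
  have d12 : i1 ≠ i2 := by simp [hi1, hi2, Fin.ext_iff]
  have d13 : i1 ≠ i3 := by simp [hi1, hi3, Fin.ext_iff]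
  have d23 : i2 ≠ i3 := by simp [hi2, hi3, Fin.ext_iff]
  have hzsum : ∀ l1 l2 : Fin m, l1 ≠ l2 → ∀ b : ZMod 3, b ≠ 0 →
      ∑ i ∈ s, α ^ ((i l1 + i l2 * b : ZMod 3)).val = 0 := by
    intro l1 l2 hne b hb
    have hmem : hammingNorm (jj l1 l2 b) ∉ {n | n ≤ m ∧ n ≠ 2} := by
      rw [hamming_jj hne hb]
      simp
    have h := hf (jj l1 l2 b) hmem
    rw [dft_support] at h
    calc ∑ i ∈ s, α ^ ((i l1 + i l2 * b : ZMod 3)).val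
        = ∑ i ∈ s, α ^ (dotp i (jj l1 l2 b)).val :=
          Finset.sum_congr rfl fun i _ => by rw [dot_jj hne b i]
      _ = 0 := h
  have hcardeq : hammingNorm f = s.card := rfl
  have hpos : 1 ≤ s.card := by
    obtain ⟨i, hi⟩ := Function.ne_iff.mp hne0
    have : i ∈ s := by
      simp only [hs, mem_filter, mem_univ, true_and]
      simpa using hi
    exact Finset.card_pos.mpr ⟨i, this⟩
  have hle5 : s.card ≤ 5 := by omega
  have hcases : s.card = 1 ∨ s.card = 2 ∨ s.card = 3 ∨ s.card = 4 ∨ s.card = 5 := by omega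
  rcases hcases with hc | hc | hc | hc | hc
  · -- n = 1
    obtain ⟨p0, hp⟩ := Finset.card_eq_one.mp hc
    have h := hzsum i0 i1 d01 1 (by decide)
    rw [hp, Finset.sum_singleton] at h
    exact pow_ne_zero _ (alpha_ne_zero hα) h
  · -- n = 2
    obtain ⟨p0, p1, hne, hp⟩ := Finset.card_eq_two.mp hc
    have hV : ∀ l1 l2 : Fin m, l1 ≠ l2 → ∀ b : ZMod 3, b ≠ 0 →
        V2p (p0 l1 + p0 l2 * b) (p1 l1 + p1 l2 * b) := by
      intro l1 l2 hnel b hb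
      refine SPLIT2 hα _ _ ?_
      have h := hzsum l1 l2 hnel b hb
      rw [hp, Finset.sum_pair hne] at h
      linear_combination h
    have hall : ∀ l, p0 l = p1 l := by
      intro l
      obtain ⟨l2, hl2a, _⟩ := pick_one hm l l
      have hb1 := E2 _ _ (hV l l2 (Ne.symm hl2a) 1 (by decide))
      have hb2 := E2 _ _ (hV l l2 (Ne.symm hl2a) 2 (by decide))
      have hsol := SOLVE2 (p1 l - p0 l) (p1 l2 - p0 l2)
        (by linear_combination hb1) (by linear_combination hb2)
      have := hsol.1
      have : p1 l = p0 l := by linear_combination this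
      exact this.symm
    exact hne (funext hall)
  · -- n = 3
    obtain ⟨p0, p1, p2, h01, h02, h12, hp⟩ := Finset.card_eq_three.mp hc
    have hV : ∀ l1 l2 : Fin m, l1 ≠ l2 → ∀ b : ZMod 3, b ≠ 0 →
        V3p (p0 l1 + p0 l2 * b) (p1 l1 + p1 l2 * b) (p2 l1 + p2 l2 * b) := by
      intro l1 l2 hnel b hb
      refine SPLIT3 hα _ _ _ ?_
      have h := hzsum l1 l2 hnel b hb
      rw [hp, Finset.sum_insert (by simp [h01, h02]), Finset.sum_pair h12] at h
      linear_combination h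
    have hL : ∀ a b : Fin m, a ≠ b →
        ((p1 a = p0 a ∧ p2 a = p0 a) ∧ (p1 b ≠ p0 b ∧ p2 b ≠ p0 b ∧ p1 b ≠ p2 b)) ∨
        ((p1 a ≠ p0 a ∧ p2 a ≠ p0 a ∧ p1 a ≠ p2 a) ∧ (p1 b = p0 b ∧ p2 b = p0 b)) := by
      intro a b hab
      have hn1 := NORM3 _ _ _ (hV a b hab 1 (by decide))
      have hn2 := NORM3 _ _ _ (hV a b hab 2 (by decide))
      simp only [hconv] at hn1 hn2
      have := L3 _ _ _ _ hn1 hn2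
      rcases this with ⟨⟨e1, e2⟩, f1, f2, f3⟩ | ⟨⟨e1, e2, e3⟩, f1, f2⟩
      · exact Or.inl ⟨⟨sub_eq_zero.mp e1, sub_eq_zero.mp e2⟩,
          fun h => f1 (by rw [h, sub_self]),
          fun h => f2 (by rw [h, sub_self]),
          fun h => f3 (by rw [h])⟩
      · exact Or.inr ⟨⟨fun h => e1 (by rw [h, sub_self]),
          fun h => e2 (by rw [h, sub_self]), fun h => e3 (by rw [h])⟩,
          sub_eq_zero.mp f1, sub_eq_zero.mp f2⟩
    rcases hL i0 i1 d01 with ⟨hC0, hI1⟩ | ⟨hI0, hC1⟩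
    · rcases hL i1 i2 d12 with ⟨hC1, _⟩ | ⟨_, hC2⟩
      · exact hI1.1 hC1.1
      · rcases hL i0 i2 d02 with ⟨_, hI2⟩ | ⟨hI0, _⟩
        · exact hI2.1 hC2.1
        · exact hI0.1 hC0.1
    · rcases hL i1 i2 d12 with ⟨hC1', hI2⟩ | ⟨hI1, _⟩
      · rcases hL i0 i2 d02 with ⟨hC0, _⟩ | ⟨_, hC2⟩
        · exact hI0.1 hC0.1
        · exact hI2.1 hC2.1
      · exact hI1.1 hC1.1
  · -- n = 4
    obtain ⟨p0, t, hp0t, hins, ht3⟩ := Finset.card_eq_succ.mp (by rw [hc])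
    obtain ⟨p1, p2, p3, h12, h13, h23, htp⟩ := Finset.card_eq_three.mp ht3
    rw [htp] at hp0t hins
    have h01 : p0 ≠ p1 := fun h => hp0t (by rw [h]; simp)
    have hV : ∀ l1 l2 : Fin m, l1 ≠ l2 → ∀ b : ZMod 3, b ≠ 0 →
        V4p (p0 l1 + p0 l2 * b) (p1 l1 + p1 l2 * b) (p2 l1 + p2 l2 * b)
          (p3 l1 + p3 l2 * b) := by
      intro l1 l2 hnel b hb
      refine SPLIT4 hα _ _ _ _ ?_
      have h := hzsum l1 l2 hnel b hb
      rw [← hins, Finset.sum_insert hp0t, Finset.sum_insert (by simp [h12, h13]),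
        Finset.sum_pair h23] at h
      linear_combination h
    -- the three pairings
    set Q1 : Fin m → Prop := fun l => p1 l = p0 l ∧ p2 l = p3 l with hQ1d
    set Q2 : Fin m → Prop := fun l => p2 l = p0 l ∧ p1 l = p3 l with hQ2d
    set Q3 : Fin m → Prop := fun l => p3 l = p0 l ∧ p1 l = p2 l with hQ3d
    have hQ : ∀ a b c : Fin m, a ≠ b → a ≠ c → b ≠ c →
        (Q1 a ∧ Q1 b ∧ Q1 c) ∨ (Q2 a ∧ Q2 b ∧ Q2 c) ∨ (Q3 a ∧ Q3 b ∧ Q3 c) := by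
      intro a b c hab hac hbc
      have hxy1 := NORM4 _ _ _ _ (hV a b hab 1 (by decide))
      have hxy2 := NORM4 _ _ _ _ (hV a b hab 2 (by decide))
      have hxz1 := NORM4 _ _ _ _ (hV a c hac 1 (by decide))
      have hxz2 := NORM4 _ _ _ _ (hV a c hac 2 (by decide))
      have hyz1 := NORM4 _ _ _ _ (hV b c hbc 1 (by decide))
      have hyz2 := NORM4 _ _ _ _ (hV b c hbc 2 (by decide))
      simp only [hconv] at hxy1 hxy2 hxz1 hxz2 hyz1 hyz2
      have := L4 _ _ _ _ _ _ _ _ _ hxy1 hxy2 hxz1 hxz2 hyz1 hyz2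
      rcases this with ⟨⟨a1, a2⟩, ⟨b1, b2⟩, c1, c2⟩ | ⟨⟨a1, a2⟩, ⟨b1, b2⟩, c1, c2⟩ |
        ⟨⟨a1, a2⟩, ⟨b1, b2⟩, c1, c2⟩
      · exact Or.inl ⟨⟨sub_eq_zero.mp a1, sub_left_inj.mp a2⟩,
          ⟨sub_eq_zero.mp b1, sub_left_inj.mp b2⟩,
          ⟨sub_eq_zero.mp c1, sub_left_inj.mp c2⟩⟩
      · exact Or.inr (Or.inl ⟨⟨sub_eq_zero.mp a1, sub_left_inj.mp a2⟩,
          ⟨sub_eq_zero.mp b1, sub_left_inj.mp b2⟩,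
          ⟨sub_eq_zero.mp c1, sub_left_inj.mp c2⟩⟩)
      · exact Or.inr (Or.inr ⟨⟨sub_eq_zero.mp a1, sub_left_inj.mp a2⟩,
          ⟨sub_eq_zero.mp b1, sub_left_inj.mp b2⟩,
          ⟨sub_eq_zero.mp c1, sub_left_inj.mp c2⟩⟩)
    have hfull : ∀ l, ((Q1 l ∧ Q2 l) ∨ (Q1 l ∧ Q3 l) ∨ (Q2 l ∧ Q3 l)) →
        Q1 l ∧ Q2 l ∧ Q3 l := fun l h => pairing_full h
    by_cases hA1 : ∀ l, Q1 l
    · exact h01 (funext fun l => ((hA1 l).1).symm)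
    by_cases hA2 : ∀ l, Q2 l
    · have h02 : p0 ≠ p2 := fun h => hp0t (by rw [h]; simp)
      exact h02 (funext fun l => ((hA2 l).1).symm)
    by_cases hA3 : ∀ l, Q3 l
    · have h03 : p0 ≠ p3 := fun h => hp0t (by rw [h]; simp)
      exact h03 (funext fun l => ((hA3 l).1).symm)
    obtain ⟨l1, hl1⟩ := not_forall.mp hA1
    obtain ⟨a, b, hab, hal, hbl⟩ := pick_two hm l1
    rcases hQ l1 a b (Ne.symm hal) (Ne.symm hbl) hab with ⟨hq1, _, _⟩ | ⟨hq2, _, _⟩ |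
      ⟨hq3, _, _⟩
    · exact hl1 hq1
    · refine hA2 fun l => ?_
      by_cases hll : l = l1
      · rw [hll]; exact hq2
      obtain ⟨c, hcl1, hcl⟩ := pick_one hm l1 l
      rcases hQ l1 l c (fun h => hll h.symm) (Ne.symm hcl1) (Ne.symm hcl) with
        ⟨hq1', _, _⟩ | ⟨_, hq2', _⟩ | ⟨hq3', _, _⟩
      · exact absurd hq1' hl1
      · exact hq2'
      · exact absurd (hfull l1 (Or.inr (Or.inr ⟨hq2, hq3'⟩))).1 hl1
    · refine hA3 fun l => ?_
      by_cases hll : l = l1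
      · rw [hll]; exact hq3
      obtain ⟨c, hcl1, hcl⟩ := pick_one hm l1 l
      rcases hQ l1 l c (fun h => hll h.symm) (Ne.symm hcl1) (Ne.symm hcl) with
        ⟨hq1', _, _⟩ | ⟨hq2', _, _⟩ | ⟨_, hq3', _⟩
      · exact absurd hq1' hl1
      · exact absurd (hfull l1 (Or.inr (Or.inr ⟨hq2', hq3⟩))).1 hl1
      · exact hq3'
  · -- n = 5
    obtain ⟨p0, t0, hp0t, hins0, ht4⟩ := Finset.card_eq_succ.mp (by rw [hc])
    obtain ⟨p1, t1, hp1t, hins1, ht3⟩ := Finset.card_eq_succ.mp (by rw [ht4])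
    obtain ⟨p2, p3, p4, h23, h24, h34, htp⟩ := Finset.card_eq_three.mp ht3
    rw [htp] at hp1t hins1
    have hV : ∀ l1 l2 : Fin m, l1 ≠ l2 → ∀ b : ZMod 3, b ≠ 0 →
        V5p (p0 l1 + p0 l2 * b) (p1 l1 + p1 l2 * b) (p2 l1 + p2 l2 * b)
          (p3 l1 + p3 l2 * b) (p4 l1 + p4 l2 * b) := by
      intro l1 l2 hnel b hb
      refine SPLIT5 hα _ _ _ _ _ ?_
      have h := hzsum l1 l2 hnel b hb
      rw [← hins0, Finset.sum_insert hp0t, ← hins1, Finset.sum_insert hp1t,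
        Finset.sum_insert (by simp [h23, h24]), Finset.sum_pair h34] at h
      linear_combination h
    have hPC : ∀ l1 l2 : Fin m, l1 ≠ l2 →
        PairConcl ![0, p1 l1 - p0 l1, p2 l1 - p0 l1, p3 l1 - p0 l1, p4 l1 - p0 l1]
          ![0, p1 l2 - p0 l2, p2 l2 - p0 l2, p3 l2 - p0 l2, p4 l2 - p0 l2] := by
      intro l1 l2 hnel
      have hn1 := NORM5 _ _ _ _ _ (hV l1 l2 hnel 1 (by decide))
      have hn2 := NORM5 _ _ _ _ _ (hV l1 l2 hnel 2 (by decide))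
      simp only [hconv] at hn1 hn2
      exact L5 _ _ _ _ _ _ _ _ hn1 hn2
    rcases hPC i0 i1 d01 with ⟨s0, hx0, hx1, hk01⟩ | ⟨hw0, hw1, hv01⟩
    · -- all-structured case
      rcases hPC i0 i2 d02 with ⟨s2, hx0', hx2, hk02⟩ | ⟨hw0', _, _⟩
      swap
      · exact hw0' ⟨s0, hx0⟩
      have hs2 : s2 = s0 := (hx0 s2).mp ((hx0' s2).mpr rfl)
      rw [hs2] at hx2 hk02
      rcases hPC i0 i3 d03 with ⟨s3, hx0'', hx3, hk03⟩ | ⟨hw0', _, _⟩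
      swap
      · exact hw0' ⟨s0, hx0⟩
      have hs3 : s3 = s0 := (hx0 s3).mp ((hx0'' s3).mpr rfl)
      rw [hs3] at hx3 hk03
      rcases hPC i1 i2 d12 with ⟨s12, hx1', hx2', hk12⟩ | ⟨hw1', _, _⟩
      swap
      · exact hw1' ⟨s0, hx1⟩
      have hs12 : s12 = s0 := (hx1 s12).mp ((hx1' s12).mpr rfl)
      rw [hs12] at hk12
      rcases hPC i1 i3 d13 with ⟨s13, hx1'', hx3', hk13⟩ | ⟨hw1', _, _⟩
      swap
      · exact hw1' ⟨s0, hx1⟩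
      have hs13 : s13 = s0 := (hx1 s13).mp ((hx1'' s13).mpr rfl)
      rw [hs13] at hk13
      rcases hPC i2 i3 d23 with ⟨s23, hx2'', hx3'', hk23⟩ | ⟨hw2', _, _⟩
      swap
      · exact hw2' ⟨s0, hx2⟩
      have hs23 : s23 = s0 := (hx2 s23).mp ((hx2'' s23).mpr rfl)
      rw [hs23] at hk23
      exact PIGEON' _ _ _ _ hk01 hk02 hk03 hk12 hk13 hk23
    · -- all-unstructured case
      rcases hPC i0 i2 d02 with ⟨s2, hx0', _, _⟩ | ⟨_, hw2, hv02⟩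
      · exact hw0 ⟨s2, hx0'⟩
      rcases hPC i1 i2 d12 with ⟨s12, hx1', _, _⟩ | ⟨_, _, hv12⟩
      · exact hw1 ⟨s12, hx1'⟩
      exact iff_contra hv01 hv02 hv12

/-- for `m ≥ 4`, the minimum distance of
`BiD^⊥(m,2,2) = A(m, {0,…,m} \\ {2})` is exactly 6. -/
theorem stmt_15 (m : ℕ) (hm : 4 ≤ m) (α : F4) (hα : α ^ 2 = α + 1) :
    (∃ f ∈ code m α {n | n ≤ m ∧ n ≠ 2}, hammingNorm f = 6) ∧
    (∀ f ∈ code m α {n | n ≤ m ∧ n ≠ 2}, f ≠ 0 → 6 ≤ hammingNorm f) :=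
  ⟨existence hm α hα, lower_bound hm α hα⟩
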